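/- Let k be an algebraically closed field of characteristic ≠ 2 and α ∈ k with α(1−α²) ≠ 0. A point (λ₁,λ₂,λ₃,λ₄) ∈ P³ lies in the common zero locus of the 15 polynomials defining the point scheme of A(α) if and only if it belongs to Z₀ ∪ Z₁ ∪ Z₂ ∪ Z₃ ∪ Z₄, where Z₀ = {e₁,e₂,e₃,e₄} (the coordinate points), Z₁ = {(λ₁,1,λ₃,1) : λ₁² = −2(1+α), λ₃² = 2}, Z₂ = {(λ₁,−1,λ₃,1) : λ₁² = −2(1−α), λ₃² = −2}, Z₃ = {(λ₁,λ₂,0,1) : λ₁² = −2, λ₂² = −1}, and Z₄ = {(0,λ₂,λ₃,1) : αλ₂² + 2λ₂ + α = 0, αλ₃² = −2λ₂²}. -/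

import Mathlib

/-- The 15 polynomials (the 4×4 minors of the matrix M) defining the
point scheme of A(α), evaluated at (x₁,x₂,x₃,x₄). -/
def PointSchemeEqs {k : Type*} [Field k] (α x1 x2 x3 x4 : k) : Prop :=
  x1 * x3 * (x1 ^ 2 + 2 * x2 ^ 2 + α * x3 ^ 2) = 0 ∧
  x1 * x3 * (x3 ^ 2 - 2 * x2 * x4) = 0 ∧
  x1 * x3 * (x2 - x4) * (x2 + x4) = 0 ∧
  x2 * x3 * (x1 ^ 2 + 2 * x2 ^ 2 + α * x3 ^ 2) = 0 ∧
  x3 * x4 * (x1 ^ 2 + 2 * x2 ^ 2 + α * x3 ^ 2) = 0 ∧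
  x3 * (x2 ^ 3 - x3 ^ 2 * x4 + x2 * x4 ^ 2) = 0 ∧
  x1 * (2 * x2 * x3 ^ 2 + x1 ^ 2 * x4 - 2 * x2 ^ 2 * x4 + α * x3 ^ 2 * x4) = 0 ∧
  x1 * x2 * (x1 ^ 2 + α * x3 ^ 2 + 2 * x4 ^ 2) = 0 ∧
  x1 * (-(x2 * x3 ^ 2) + x2 ^ 2 * x4 + x4 ^ 3) = 0 ∧
  x1 ^ 2 * x2 ^ 2 + α * x2 ^ 2 * x3 ^ 2 + 2 * x2 * x3 ^ 2 * x4
    + x1 ^ 2 * x4 ^ 2 + α * x3 ^ 2 * x4 ^ 2 = 0 ∧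
  x1 ^ 2 * x3 ^ 2 - x1 ^ 2 * x2 * x4 + 2 * x2 ^ 3 * x4 + α * x2 * x3 ^ 2 * x4 = 0 ∧
  x1 ^ 2 * x2 ^ 2 + 2 * x2 ^ 2 * x4 ^ 2 + α * x3 ^ 2 * x4 ^ 2 = 0 ∧
  x4 * (x2 ^ 3 - x3 ^ 2 * x4 + x2 * x4 ^ 2) = 0 ∧
  x1 * (x2 ^ 3 - x3 ^ 2 * x4 + x2 * x4 ^ 2) = 0 ∧
  x3 * (x1 ^ 2 * x2 + α * x2 ^ 2 * x4 + 2 * x2 * x4 ^ 2 + α * x4 ^ 3) = 0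

lemma auxZ1 {k : Type*} [Field k] (α c m1 m3 : k)
    (hm1 : m1 ^ 2 = -2 * (1 + α)) (hm3 : m3 ^ 2 = 2) :
    PointSchemeEqs α (c * m1) c (c * m3) c := by
  unfold PointSchemeEqs
  exact ⟨by linear_combination c^4*m1*m3*hm1 + α*c^4*m1*m3*hm3,
    by linear_combination c^4*m1*m3*hm3,
    by ring,
    by linear_combination c^4*m3*hm1 + α*c^4*m3*hm3,
    by linear_combination c^4*m3*hm1 + α*c^4*m3*hm3,
    by linear_combination -c^4*m3*hm3,
    by linear_combination c^4*m1*hm1 + (2+α)*c^4*m1*hm3,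
    by linear_combination c^4*m1*hm1 + α*c^4*m1*hm3,
    by linear_combination -c^4*m1*hm3,
    by linear_combination 2*c^4*hm1 + (2+2*α)*c^4*hm3,
    by linear_combination c^4*(m3^2-1)*hm1 + (-(2+α))*c^4*hm3,
    by linear_combination c^4*hm1 + α*c^4*hm3,
    by linear_combination -c^4*hm3,
    by linear_combination -c^4*m1*hm3,
    by linear_combination c^4*m3*hm1⟩

lemma auxZ2 {k : Type*} [Field k] (α c m1 m3 : k)
    (hm1 : m1 ^ 2 = -2 * (1 - α)) (hm3 : m3 ^ 2 = -2) :
    PointSchemeEqs α (c * m1) (-c) (c * m3) c := by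
  unfold PointSchemeEqs
  exact ⟨by linear_combination c^4*m1*m3*hm1 + α*c^4*m1*m3*hm3,
    by linear_combination c^4*m1*m3*hm3,
    by ring,
    by linear_combination -c^4*m3*hm1 - α*c^4*m3*hm3,
    by linear_combination c^4*m3*hm1 + α*c^4*m3*hm3,
    by linear_combination -c^4*m3*hm3,
    by linear_combination c^4*m1*hm1 + (α-2)*c^4*m1*hm3,
    by linear_combination -c^4*m1*hm1 - α*c^4*m1*hm3,
    by linear_combination c^4*m1*hm3,
    by linear_combination 2*c^4*hm1 + (2*α-2)*c^4*hm3,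
    by linear_combination c^4*(m3^2+1)*hm1 + (α-2)*c^4*hm3,
    by linear_combination c^4*hm1 + α*c^4*hm3,
    by linear_combination -c^4*hm3,
    by linear_combination -c^4*m1*hm3,
    by linear_combination -c^4*m3*hm1⟩

lemma auxZ3 {k : Type*} [Field k] (α c m1 m2 : k)
    (hm1 : m1 ^ 2 = -2) (hm2 : m2 ^ 2 = -1) :
    PointSchemeEqs α (c * m1) (c * m2) 0 c := by
  unfold PointSchemeEqs
  exact ⟨by ring, by ring, by ring, by ring, by ring, by ring,
    by linear_combination c^4*m1*hm1 - 2*c^4*m1*hm2,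
    by linear_combination c^4*m1*m2*hm1,
    by linear_combination c^4*m1*hm2,
    by linear_combination c^4*m1^2*hm2,
    by linear_combination -c^4*m2*hm1 + 2*c^4*m2*hm2,
    by linear_combination c^4*m2^2*hm1,
    by linear_combination c^4*m2*hm2,
    by linear_combination c^4*m1*m2*hm2,
    by ring⟩

lemma auxZ4 {k : Type*} [Field k] (α c m2 m3 : k) (hα0 : α ≠ 0)
    (hm2 : α * m2 ^ 2 + 2 * m2 + α = 0) (hm3 : α * m3 ^ 2 = -2 * m2 ^ 2) :
    PointSchemeEqs α 0 (c * m2) (c * m3) c := by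
  have key : c * m3 * ((c * m2) ^ 3 - (c * m3) ^ 2 * c + c * m2 * c ^ 2) = 0 := by
    have h : α * (c * m3 * ((c * m2) ^ 3 - (c * m3) ^ 2 * c + c * m2 * c ^ 2)) = 0 := by
      linear_combination c^4*m3*m2*hm2 - c^4*m3*hm3
    exact (mul_eq_zero.mp h).resolve_left hα0
  have key2 : c * ((c * m2) ^ 3 - (c * m3) ^ 2 * c + c * m2 * c ^ 2) = 0 := by
    have h : α * (c * ((c * m2) ^ 3 - (c * m3) ^ 2 * c + c * m2 * c ^ 2)) = 0 := by
      linear_combination c^4*m2*hm2 - c^4*hm3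
    exact (mul_eq_zero.mp h).resolve_left hα0
  unfold PointSchemeEqs
  exact ⟨by ring, by ring, by ring,
    by linear_combination c^4*m2*m3*hm3,
    by linear_combination c^4*m3*hm3,
    key,
    by ring, by ring, by ring,
    by linear_combination c^4*m3^2*hm2,
    by linear_combination c^4*m2*hm3,
    by linear_combination c^4*hm3,
    key2,
    by ring,
    by linear_combination c^4*m3*hm2⟩

theorem stmt_3 (k : Type*) [Field k] [IsAlgClosed k] (hchar : (2 : k) ≠ 0)
    (α : k) (hα : α * (1 - α ^ 2) ≠ 0)
    (l1 l2 l3 l4 : k) (hne : ¬(l1 = 0 ∧ l2 = 0 ∧ l3 = 0 ∧ l4 = 0)) :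
    PointSchemeEqs α l1 l2 l3 l4 ↔
      ∃ c : k, c ≠ 0 ∧
        ((l1 = c ∧ l2 = 0 ∧ l3 = 0 ∧ l4 = 0) ∨
         (l1 = 0 ∧ l2 = c ∧ l3 = 0 ∧ l4 = 0) ∨
         (l1 = 0 ∧ l2 = 0 ∧ l3 = c ∧ l4 = 0) ∨
         (l1 = 0 ∧ l2 = 0 ∧ l3 = 0 ∧ l4 = c) ∨
         (∃ m1 m3 : k, m1 ^ 2 = -2 * (1 + α) ∧ m3 ^ 2 = 2 ∧
            l1 = c * m1 ∧ l2 = c ∧ l3 = c * m3 ∧ l4 = c) ∨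
         (∃ m1 m3 : k, m1 ^ 2 = -2 * (1 - α) ∧ m3 ^ 2 = -2 ∧
            l1 = c * m1 ∧ l2 = -c ∧ l3 = c * m3 ∧ l4 = c) ∨
         (∃ m1 m2 : k, m1 ^ 2 = -2 ∧ m2 ^ 2 = -1 ∧
            l1 = c * m1 ∧ l2 = c * m2 ∧ l3 = 0 ∧ l4 = c) ∨
         (∃ m2 m3 : k, α * m2 ^ 2 + 2 * m2 + α = 0 ∧ α * m3 ^ 2 = -2 * m2 ^ 2 ∧
            l1 = 0 ∧ l2 = c * m2 ∧ l3 = c * m3 ∧ l4 = c)) := by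
  have hα0 : α ≠ 0 := fun h => hα (by rw [h]; ring)
  constructor
  · rintro ⟨h1, h2, h3, h4, h5, h6, h7, h8, h9, h10, h11, h12, h13, h14, h15⟩
    by_cases hw : l4 = 0
    · subst hw
      have e12 : l1 * l2 = 0 := by
        have : (l1 * l2) ^ 2 = 0 := by linear_combination h12
        exact sq_eq_zero_iff.mp this
      have e13 : l1 * l3 = 0 := by
        have : (l1 * l3) ^ 2 = 0 := by linear_combination h11
        exact sq_eq_zero_iff.mp this
      have e23 : l2 * l3 = 0 := by
        have h' : α * (l2 * l3) ^ 2 = 0 := by linear_combination h10 - h12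
        exact sq_eq_zero_iff.mp ((mul_eq_zero.mp h').resolve_left hα0)
      by_cases hx : l1 = 0
      · by_cases hy : l2 = 0
        · have hz : l3 ≠ 0 := fun hz => hne ⟨hx, hy, hz, rfl⟩
          exact ⟨l3, hz, Or.inr (Or.inr (Or.inl ⟨hx, hy, rfl, rfl⟩))⟩
        · have hz : l3 = 0 := (mul_eq_zero.mp e23).resolve_left hy
          exact ⟨l2, hy, Or.inr (Or.inl ⟨hx, rfl, hz, rfl⟩)⟩
      · have hy : l2 = 0 := (mul_eq_zero.mp e12).resolve_left hx
        have hz : l3 = 0 := (mul_eq_zero.mp e13).resolve_left hx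
        exact ⟨l1, hx, Or.inl ⟨rfl, hy, hz, rfl⟩⟩
    · by_cases hz : l3 = 0
      · subst hz
        by_cases hyw : l2 ^ 2 + l4 ^ 2 = 0
        · -- Z₃
          have hyne : l2 ≠ 0 := by
            intro hy0
            apply hw
            have : l4 ^ 2 = 0 := by linear_combination hyw - l2 * hy0
            exact sq_eq_zero_iff.mp this
          have hx2 : l1 ^ 2 = -2 * l4 ^ 2 := by
            have h' : l2 ^ 2 * (l1 ^ 2 + 2 * l4 ^ 2) = 0 := by linear_combination h12
            have := (mul_eq_zero.mp h').resolve_left (pow_ne_zero 2 hyne)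
            linear_combination this
          refine ⟨l4, hw, Or.inr (Or.inr (Or.inr (Or.inr (Or.inr (Or.inr (Or.inl
            ⟨l1 / l4, l2 / l4, ?_, ?_, ?_, ?_, rfl, rfl⟩))))))⟩
          · rw [div_pow, div_eq_iff (pow_ne_zero 2 hw)]; linear_combination hx2
          · rw [div_pow, div_eq_iff (pow_ne_zero 2 hw)]; linear_combination hyw
          · rw [mul_comm]; exact (div_mul_cancel₀ l1 hw).symm
          · rw [mul_comm]; exact (div_mul_cancel₀ l2 hw).symm
        · -- e₄
          have hy0 : l2 = 0 := by
            have h' : l4 * (l2 * (l2 ^ 2 + l4 ^ 2)) = 0 := by linear_combination h13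
            exact (mul_eq_zero.mp ((mul_eq_zero.mp h').resolve_left hw)).resolve_right hyw
          have hx0 : l1 = 0 := by
            have h' : l1 * (l4 * (l2 ^ 2 + l4 ^ 2)) = 0 := by linear_combination h9
            exact (mul_eq_zero.mp h').resolve_right (mul_ne_zero hw hyw)
          exact ⟨l4, hw, Or.inr (Or.inr (Or.inr (Or.inl ⟨hx0, hy0, rfl, rfl⟩)))⟩
      · by_cases hx : l1 = 0
        · -- Z₄
          have hP : α * l2 ^ 2 + 2 * l2 * l4 + α * l4 ^ 2 = 0 := by
            have h' : l3 * l4 * (α * l2 ^ 2 + 2 * l2 * l4 + α * l4 ^ 2) = 0 := by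
              linear_combination h15 - l3 * l2 * l1 * hx
            exact (mul_eq_zero.mp h').resolve_left (mul_ne_zero hz hw)
          have hQ : α * l3 ^ 2 + 2 * l2 ^ 2 = 0 := by
            have h' : l4 ^ 2 * (α * l3 ^ 2 + 2 * l2 ^ 2) = 0 := by
              linear_combination h12 - l1 * l2 ^ 2 * hx
            exact (mul_eq_zero.mp h').resolve_left (pow_ne_zero 2 hw)
          refine ⟨l4, hw, Or.inr (Or.inr (Or.inr (Or.inr (Or.inr (Or.inr (Or.inr
            ⟨l2 / l4, l3 / l4, ?_, ?_, hx, ?_, ?_, rfl⟩))))))⟩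
          · refine mul_left_cancel₀ (pow_ne_zero 2 hw) ?_
            field_simp
            linear_combination hP
          · refine mul_left_cancel₀ (pow_ne_zero 2 hw) ?_
            field_simp
            linear_combination hQ
          · rw [mul_comm]; exact (div_mul_cancel₀ l2 hw).symm
          · rw [mul_comm]; exact (div_mul_cancel₀ l3 hw).symm
        · -- Z₁ or Z₂
          have hxz : l1 * l3 ≠ 0 := mul_ne_zero hx hz
          have h2' : l3 ^ 2 = 2 * l2 * l4 := by
            have := (mul_eq_zero.mp h2).resolve_left hxz
            linear_combination this
          have h1' : l1 ^ 2 + 2 * l2 ^ 2 + α * l3 ^ 2 = 0 :=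
            (mul_eq_zero.mp h1).resolve_left hxz
          have h3' : (l2 - l4) * (l2 + l4) = 0 := by
            have h' : l1 * l3 * ((l2 - l4) * (l2 + l4)) = 0 := by linear_combination h3
            exact (mul_eq_zero.mp h').resolve_left hxz
          rcases mul_eq_zero.mp h3' with hy | hy
          · -- l2 = l4, Z₁
            have hy' : l2 = l4 := by linear_combination hy
            refine ⟨l4, hw, Or.inr (Or.inr (Or.inr (Or.inr (Or.inl
              ⟨l1 / l4, l3 / l4, ?_, ?_, ?_, hy', ?_, rfl⟩))))⟩
            · rw [div_pow, div_eq_iff (pow_ne_zero 2 hw)]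
              linear_combination h1' - α * h2' + (-(2 * (l2 + l4)) - 2 * α * l4) * hy'
            · rw [div_pow, div_eq_iff (pow_ne_zero 2 hw)]
              linear_combination h2' + 2 * l4 * hy'
            · rw [mul_comm]; exact (div_mul_cancel₀ l1 hw).symm
            · rw [mul_comm]; exact (div_mul_cancel₀ l3 hw).symm
          · -- l2 = -l4, Z₂
            have hy' : l2 = -l4 := by linear_combination hy
            refine ⟨l4, hw, Or.inr (Or.inr (Or.inr (Or.inr (Or.inr (Or.inl
              ⟨l1 / l4, l3 / l4, ?_, ?_, ?_, by rw [hy'], ?_, rfl⟩)))))⟩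
            · rw [div_pow, div_eq_iff (pow_ne_zero 2 hw)]
              linear_combination h1' - α * h2' + (-(2 * (l2 - l4)) - 2 * α * l4) * hy'
            · rw [div_pow, div_eq_iff (pow_ne_zero 2 hw)]
              linear_combination h2' + 2 * l4 * hy'
            · rw [mul_comm]; exact (div_mul_cancel₀ l1 hw).symm
            · rw [mul_comm]; exact (div_mul_cancel₀ l3 hw).symm
  · rintro ⟨c, hc, hcase⟩
    rcases hcase with ⟨rfl, rfl, rfl, rfl⟩ | ⟨rfl, rfl, rfl, rfl⟩ | ⟨rfl, rfl, rfl, rfl⟩ |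
      ⟨rfl, rfl, rfl, rfl⟩ |
      ⟨m1, m3, hm1, hm3, e1, e2, e3, e4⟩ | ⟨m1, m3, hm1, hm3, e1, e2, e3, e4⟩ |
      ⟨m1, m2, hm1, hm2, e1, e2, e3, e4⟩ | ⟨m2, m3, hm2, hm3, e1, e2, e3, e4⟩
    · exact ⟨by ring, by ring, by ring, by ring, by ring, by ring, by ring, by ring, by ring,
        by ring, by ring, by ring, by ring, by ring, by ring⟩
    · exact ⟨by ring, by ring, by ring, by ring, by ring, by ring, by ring, by ring, by ring,
        by ring, by ring, by ring, by ring, by ring, by ring⟩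
    · exact ⟨by ring, by ring, by ring, by ring, by ring, by ring, by ring, by ring, by ring,
        by ring, by ring, by ring, by ring, by ring, by ring⟩
    · exact ⟨by ring, by ring, by ring, by ring, by ring, by ring, by ring, by ring, by ring,
        by ring, by ring, by ring, by ring, by ring, by ring⟩
    · rw [e1, e2, e3, e4]; exact auxZ1 α c m1 m3 hm1 hm3
    · rw [e1, e2, e3, e4]; exact auxZ2 α c m1 m3 hm1 hm3
    · rw [e1, e2, e3, e4]; exact auxZ3 α c m1 m2 hm1 hm2
    · rw [e1, e2, e3, e4]; exact auxZ4 α c m2 m3 hα0 hm2 hm3
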